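/- The set of positive integers n with G(n) = n(n+2)/3 is exactly the set {2^r - 1 : r ≥ 1}. -/

import Mathlib

open Finset

/-- The largest odd divisor of `k`. -/
def oddPart (k : ℕ) : ℕ := ordCompl[2] k

/-- `V n = ∑_{k=1}^n α(k)/k` as a rational number. -/
def V (n : ℕ) : ℚ := ∑ k ∈ Finset.Icc 1 n, (oddPart k : ℚ) / k

/-- `v n = V n - 2n/3`. -/
def v (n : ℕ) : ℚ := V n - 2 * n / 3

/-- `U n = ∑_{k=1}^n α(k)`. -/
def U (n : ℕ) : ℕ := ∑ k ∈ Finset.Icc 1 n, oddPart k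

/-- `G n = ∑_{k=1}^n (n+1-k)·α(k)/k` as a rational number. -/
def G (n : ℕ) : ℚ := ∑ k ∈ Finset.Icc 1 n, ((n : ℚ) + 1 - k) * (oddPart k : ℚ) / k

/-- `g n = n(n+2)/3 - G n`. -/
def g (n : ℕ) : ℚ := n * (n + 2) / 3 - G n

lemma oddPart_odd (k : ℕ) : oddPart (2 * k + 1) = 2 * k + 1 := by
  unfold oddPart
  rw [Nat.factorization_eq_zero_of_not_dvd (by omega)]
  simp

lemma oddPart_two_mul (k : ℕ) : oddPart (2 * k) = oddPart k := by
  unfold oddPart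
  rw [Nat.ordCompl_mul]
  norm_num

lemma f_odd (k : ℕ) : (oddPart (2 * k + 1) : ℚ) / (2 * k + 1 : ℕ) = 1 := by
  rw [oddPart_odd]
  have : ((2 * k + 1 : ℕ) : ℚ) ≠ 0 := by positivity
  field_simp

lemma f_even (k : ℕ) :
    (oddPart (2 * k) : ℚ) / (2 * k : ℕ) = ((oddPart k : ℚ) / k) / 2 := by
  rw [oddPart_two_mul]
  rcases Nat.eq_zero_or_pos k with h | h
  · subst h; simp
  · push_cast
    rw [div_div, mul_comm (k:ℚ) 2]

lemma V_zero : V 0 = 0 := by simp [V]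

lemma V_succ (n : ℕ) : V (n + 1) = V n + (oddPart (n + 1) : ℚ) / (n + 1 : ℕ) := by
  unfold V
  rw [Finset.sum_Icc_succ_top (by omega)]

lemma V_two_mul (n : ℕ) : V (2 * n) = n + V n / 2 := by
  induction n with
  | zero => simp [V_zero]
  | succ n ih =>
      have h1 : 2 * (n + 1) = (2 * n + 1) + 1 := by ring
      rw [h1, V_succ, show (2 * n + 1) = 2 * n + 1 from rfl, V_succ, ih, V_succ]
      have h2 : ((2 * n + 1) + 1) = 2 * (n + 1) := by ring
      rw [h2, f_even, f_odd]
      push_cast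
      ring

lemma v_zero : v 0 = 0 := by simp [v, V_zero]

lemma v_two_mul (n : ℕ) : v (2 * n) = v n / 2 := by
  unfold v
  rw [V_two_mul]
  push_cast
  ring

lemma v_odd (n : ℕ) : v (2 * n + 1) = v n / 2 + 1 / 3 := by
  unfold v
  rw [V_succ, f_odd, V_two_mul]
  push_cast
  ring

lemma v_nonneg (n : ℕ) : 0 ≤ v n := by
  induction n using Nat.evenOddRec with
  | h0 => rw [v_zero]
  | h_even n ih => rw [v_two_mul]; linarith
  | h_odd n ih => rw [v_odd]; linarith

lemma v_pos (n : ℕ) (hn : 0 < n) : 0 < v n := by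
  induction n using Nat.evenOddRec with
  | h0 => omega
  | h_even n ih =>
      have hn' : 0 < n := by omega
      rw [v_two_mul]; have := ih hn'; linarith
  | h_odd n ih =>
      rw [v_odd]; have := v_nonneg n; linarith

lemma G_zero : G 0 = 0 := by simp [G]

lemma G_succ (n : ℕ) : G (n + 1) = G n + V (n + 1) := by
  unfold G V
  rw [Finset.sum_Icc_succ_top (a := 1) (b := n) (by omega),
      Finset.sum_Icc_succ_top (a := 1) (b := n)
        (f := fun k => (oddPart k : ℚ) / k) (by omega)]
  have hsum : ∑ k ∈ Finset.Icc 1 n, (((n + 1 : ℕ) : ℚ) + 1 - k) * (oddPart k : ℚ) / k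
      = ∑ k ∈ Finset.Icc 1 n, (((n : ℚ) + 1 - k) * (oddPart k : ℚ) / k + (oddPart k : ℚ) / k) := by
    apply Finset.sum_congr rfl
    intro k hk
    have hk1 : 1 ≤ k := (Finset.mem_Icc.mp hk).1
    have : (k : ℚ) ≠ 0 := by positivity
    field_simp
    push_cast
    ring
  rw [hsum, Finset.sum_add_distrib]
  push_cast
  ring

lemma g_zero : g 0 = 0 := by simp [g, G_zero]

lemma g_succ (n : ℕ) : g (n + 1) = g n + 1 / 3 - v (n + 1) := by
  unfold g v
  rw [G_succ]
  push_cast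
  ring

lemma g_rec (n : ℕ) : g (2 * n) = g n + v n / 2 ∧ g (2 * n + 1) = g n := by
  induction n with
  | zero =>
      constructor
      · simp [v_zero, g_zero]
      · rw [show 2 * 0 + 1 = 0 + 1 from rfl, g_succ]
        rw [show (0:ℕ) + 1 = 2 * 0 + 1 from rfl, v_odd, v_zero]
        ring
  | succ n ih =>
      obtain ⟨ihe, iho⟩ := ih
      have he : g (2 * (n + 1)) = g (n + 1) + v (n + 1) / 2 := by
        have h1 : 2 * (n + 1) = (2 * n + 1) + 1 := by ring
        rw [h1, g_succ, iho]
        have h2 : (2 * n + 1) + 1 = 2 * (n + 1) := by ring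
        rw [h2, v_two_mul, g_succ]
        ring
      refine ⟨he, ?_⟩
      rw [show 2 * (n + 1) + 1 = (2 * (n + 1)) + 1 from rfl, g_succ, he, v_odd]
      ring

lemma g_nonneg (n : ℕ) : 0 ≤ g n := by
  induction n using Nat.evenOddRec with
  | h0 => rw [g_zero]
  | h_even n ih =>
      rw [(g_rec n).1]; have := v_nonneg n; linarith
  | h_odd n ih =>
      rw [(g_rec n).2]; exact ih

lemma g_pow (r : ℕ) : g (2 ^ r - 1) = 0 := by
  induction r with
  | zero => simp only [pow_zero]; exact g_zero
  | succ r ih =>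
      have h : 2 ^ (r + 1) - 1 = 2 * (2 ^ r - 1) + 1 := by
        have : 1 ≤ 2 ^ r := Nat.one_le_two_pow
        omega
      rw [h, (g_rec _).2, ih]

lemma g_eq_zero_imp (n : ℕ) (hn : 0 < n) (hg : g n = 0) :
    ∃ r : ℕ, 1 ≤ r ∧ n = 2 ^ r - 1 := by
  induction n using Nat.strong_induction_on with
  | _ n ih =>
      rcases Nat.even_or_odd n with ⟨m, hm⟩ | ⟨m, hm⟩
      · -- n even, contradiction
        exfalso
        have hm2 : n = 2 * m := by omega
        have hmpos : 0 < m := by omega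
        have := (g_rec m).1
        rw [hm2] at hg
        have hv := v_pos m hmpos
        have hgm := g_nonneg m
        rw [this] at hg
        linarith
      · have hm2 : n = 2 * m + 1 := by omega
        have hgm : g m = 0 := by
          have := (g_rec m).2
          rw [hm2, this] at hg; exact hg
        rcases Nat.eq_zero_or_pos m with h0 | hmpos
        · exact ⟨1, le_refl 1, by omega⟩
        · obtain ⟨r, hr1, hr2⟩ := ih m (by omega) hmpos hgm
          refine ⟨r + 1, by omega, ?_⟩
          have : 1 ≤ 2 ^ r := Nat.one_le_two_pow
          have : 2 ^ (r + 1) = 2 * 2 ^ r := by ring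
          omega

theorem stmt17 :
    {n : ℕ | 0 < n ∧ G n = (n : ℚ) * (n + 2) / 3} =
      {n : ℕ | ∃ r : ℕ, 1 ≤ r ∧ n = 2 ^ r - 1} := by
  ext n
  simp only [Set.mem_setOf_eq]
  constructor
  · rintro ⟨hn, hG⟩
    apply g_eq_zero_imp n hn
    unfold g
    rw [hG]
    ring
  · rintro ⟨r, hr, hn⟩
    have hpos : 0 < n := by
      have h1 : 2 ≤ 2 ^ r := by
        calc 2 = 2 ^ 1 := by norm_num
        _ ≤ 2 ^ r := Nat.pow_le_pow_right (by norm_num) hr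
      omega
    refine ⟨hpos, ?_⟩
    have hg : g n = 0 := hn ▸ g_pow r
    unfold g at hg
    linarith
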